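/- The nilradical (maximal nilpotent ideal) of g~ equals span{e1,e2,e3}; in particular, no nonzero linear combination alpha*e4 + beta*e5 lies in a nilpotent ideal of g~. -/
import Mathlib


open Matrix
open scoped Matrix

noncomputable section

abbrev V : Type := Fin 5 → ℝ

/-- standard basis of `ℝ⁵` -/
def e (i : Fin 5) : V := Pi.single i 1

/-- the Lie bracket of the solvable Lie algebra `g~`, given by
`[e1,e2]=-e3, [e4,e2]=-e1, [e4,e1]=e2, [e5,e1]=-e1+e3, [e5,e2]=-e2, [e5,e3]=-2e3,`
`[e5,e4]=e1+(7/12)e3`, extended bilinearly and antisymmetrically. -/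
def br (x y : V) : V :=
  ![-(x 3 * y 1) + x 1 * y 3 - x 4 * y 0 + x 0 * y 4 + x 4 * y 3 - x 3 * y 4,
    x 3 * y 0 - x 0 * y 3 - x 4 * y 1 + x 1 * y 4,
    -(x 0 * y 1) + x 1 * y 0 + x 4 * y 0 - x 0 * y 4 - 2 * (x 4 * y 2) + 2 * (x 2 * y 4)
      + (7/12) * (x 4 * y 3) - (7/12) * (x 3 * y 4),
    0, 0]

/-- the indefinite metric `g~` on `ℝ⁵`. -/
def gm (x y : V) : ℝ :=
  (497/576) * x 0 * y 0 + (49/192) * x 1 * y 1 + 2 * (x 2 * y 2)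
    - (7/12) * (x 0 * y 2 + x 2 * y 0) - (245/6144) * (x 3 * y 3) - (1225/6144) * (x 4 * y 4)

/-- span of brackets of elements of two subspaces -/
def brSpan (A B : Submodule ℝ V) : Submodule ℝ V :=
  Submodule.span ℝ {z : V | ∃ x ∈ A, ∃ y ∈ B, z = br x y}

/-- lower central series of a subspace `I` -/
def lcsOf (I : Submodule ℝ V) : ℕ → Submodule ℝ V
  | 0 => I
  | k + 1 => brSpan I (lcsOf I k)

/-- `I` is a nilpotent ideal of `g~` -/
def IsNilpotentIdeal (I : Submodule ℝ V) : Prop :=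
  (∀ x : V, ∀ y ∈ I, br x y ∈ I) ∧ ∃ k : ℕ, lcsOf I k = ⊥

/-- The nilradical of `g~` equals `span{e1,e2,e3}`; in particular no nonzero combination
`α e4 + β e5` lies in a nilpotent ideal. -/

lemma br_app3 (x y : V) : br x y 3 = 0 := by simp [br]

lemma br_app4 (x y : V) : br x y 4 = 0 := by simp [br]

/-- `{x | x 3 = 0 ∧ x 4 = 0}` as a submodule -/
def Np : Submodule ℝ V where
  carrier := {x : V | x 3 = 0 ∧ x 4 = 0}
  add_mem' := fun ha hb => ⟨by simp [ha.1, hb.1], by simp [ha.2, hb.2]⟩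
  zero_mem' := ⟨rfl, rfl⟩
  smul_mem' := fun c x hx => ⟨by simp [hx.1], by simp [hx.2]⟩

lemma mem_Np {x : V} : x ∈ Np ↔ x 3 = 0 ∧ x 4 = 0 := Iff.rfl

lemma span_eq_Np : Submodule.span ℝ ({e 0, e 1, e 2} : Set V) = Np := by
  apply le_antisymm
  · rw [Submodule.span_le]
    rintro x (rfl | rfl | rfl) <;>
      exact ⟨by simp [e, Pi.single_apply], by simp [e, Pi.single_apply]⟩
  · intro x hx
    obtain ⟨h3, h4⟩ := hx
    have hx' : x = x 0 • e 0 + x 1 • e 1 + x 2 • e 2 := by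
      funext i; fin_cases i <;> simp [e, Pi.single_apply, h3, h4]
    rw [hx']
    refine add_mem (add_mem ?_ ?_) ?_ <;>
      exact Submodule.smul_mem _ _ (Submodule.subset_span (by simp))

/-- `{x | x 0 = x 1 = x 3 = x 4 = 0}` as a submodule -/
def Mp : Submodule ℝ V where
  carrier := {x : V | x 0 = 0 ∧ x 1 = 0 ∧ x 3 = 0 ∧ x 4 = 0}
  add_mem' := fun ha hb =>
    ⟨by simp [ha.1, hb.1], by simp [ha.2.1, hb.2.1], by simp [ha.2.2.1, hb.2.2.1],
      by simp [ha.2.2.2, hb.2.2.2]⟩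
  zero_mem' := ⟨rfl, rfl, rfl, rfl⟩
  smul_mem' := fun c x hx =>
    ⟨by simp [hx.1], by simp [hx.2.1], by simp [hx.2.2.1], by simp [hx.2.2.2]⟩

/-- iterated bracket sequence used to contradict nilpotency -/
def seqw (v : V) : ℕ → V
  | 0 => br (e 0) v
  | n + 1 => br v (seqw v n)

lemma key (I : Submodule ℝ V) (hI : IsNilpotentIdeal I) {v : V} (hv : v ∈ I) :
    v 3 = 0 ∧ v 4 = 0 := by
  by_contra hc
  obtain ⟨hideal, k, hk⟩ := hI
  have hr : 0 < v 3 ^ 2 + v 4 ^ 2 := by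
    rcases not_and_or.1 hc with h | h
    · have : 0 < v 3 ^ 2 := by positivity
      nlinarith [sq_nonneg (v 4)]
    · have : 0 < v 4 ^ 2 := by positivity
      nlinarith [sq_nonneg (v 3)]
  have hmem : ∀ n, seqw v n ∈ lcsOf I n := by
    intro n
    induction n with
    | zero => exact hideal (e 0) v hv
    | succ n ih => exact Submodule.subset_span ⟨v, hv, seqw v n, ih, rfl⟩
  have hzero : ∀ n, seqw v n 3 = 0 ∧ seqw v n 4 = 0 := by
    intro n
    cases n <;> exact ⟨br_app3 _ _, br_app4 _ _⟩
  have hpos : ∀ n, 0 < (seqw v n 0) ^ 2 + (seqw v n 1) ^ 2 := by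
    intro n
    induction n with
    | zero =>
        have h0 : seqw v 0 0 = v 4 := by simp [seqw, e, br]
        have h1 : seqw v 0 1 = -(v 3) := by simp [seqw, e, br]
        rw [h0, h1]; nlinarith [hr]
    | succ n ih =>
        obtain ⟨hz3, hz4⟩ := hzero n
        have h0 : seqw v (n + 1) 0 = -(v 3 * seqw v n 1) - v 4 * seqw v n 0 := by
          show br v (seqw v n) 0 = _
          simp [br, hz3, hz4]
        have h1 : seqw v (n + 1) 1 = v 3 * seqw v n 0 - v 4 * seqw v n 1 := by
          show br v (seqw v n) 1 = _
          simp [br, hz3, hz4]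
        rw [h0, h1]
        have heq : (-(v 3 * seqw v n 1) - v 4 * seqw v n 0) ^ 2
            + (v 3 * seqw v n 0 - v 4 * seqw v n 1) ^ 2
            = (v 3 ^ 2 + v 4 ^ 2) * ((seqw v n 0) ^ 2 + (seqw v n 1) ^ 2) := by ring
        rw [heq]
        exact mul_pos hr ih
  have hbot : seqw v k = 0 := by
    have := hmem k
    rw [hk, Submodule.mem_bot] at this
    exact this
  have := hpos k
  rw [hbot] at this
  simp at this

theorem nilradical_eq :
    IsNilpotentIdeal (Submodule.span ℝ ({e 0, e 1, e 2} : Set V)) ∧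
    (∀ I : Submodule ℝ V, IsNilpotentIdeal I →
      I ≤ Submodule.span ℝ ({e 0, e 1, e 2} : Set V)) ∧
    (∀ α β : ℝ, ¬(α = 0 ∧ β = 0) → ∀ I : Submodule ℝ V, IsNilpotentIdeal I →
      α • e 3 + β • e 4 ∉ I) := by
  refine ⟨⟨?_, 2, ?_⟩, ?_, ?_⟩
  · intro x y _
    rw [span_eq_Np]
    exact ⟨br_app3 x y, br_app4 x y⟩
  · have h1 : lcsOf (Submodule.span ℝ ({e 0, e 1, e 2} : Set V)) 1 ≤ Mp := by
      show brSpan _ _ ≤ Mp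
      rw [brSpan, Submodule.span_le]
      rintro z ⟨x, hx, y, hy, rfl⟩
      rw [span_eq_Np] at hx hy
      obtain ⟨hx3, hx4⟩ := hx
      obtain ⟨hy3, hy4⟩ := hy
      exact ⟨by simp [br, hx3, hx4, hy3, hy4], by simp [br, hx3, hx4, hy3, hy4],
        br_app3 x y, br_app4 x y⟩
    rw [show lcsOf (Submodule.span ℝ ({e 0, e 1, e 2} : Set V)) 2
        = brSpan (Submodule.span ℝ ({e 0, e 1, e 2} : Set V))
          (lcsOf (Submodule.span ℝ ({e 0, e 1, e 2} : Set V)) 1) from rfl]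
    rw [eq_bot_iff, brSpan, Submodule.span_le]
    rintro z ⟨x, hx, y, hy, rfl⟩
    rw [span_eq_Np] at hx
    obtain ⟨hx3, hx4⟩ := hx
    obtain ⟨hy0, hy1, hy3, hy4⟩ := h1 hy
    have : br x y = 0 := by
      funext i
      fin_cases i <;> simp [br, hx3, hx4, hy0, hy1, hy3, hy4]
    simp [this]
  · intro I hI v hv
    rw [span_eq_Np]
    exact key I hI hv
  · intro α β h I hI hmem
    have hk := key I hI hmem
    have h3 : (α • e 3 + β • e 4) 3 = α := by simp [e, Pi.single_apply]
    have h4 : (α • e 3 + β • e 4) 4 = β := by simp [e, Pi.single_apply]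
    rw [h3, h4] at hk
    exact h hk
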